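/- Every associate φ(x,z) of the one-dimensional additive formal group F_a(x,y) = x+y is of the form φ(x,z) = e^{z p(x) d/dx} x for a uniquely determined p(x) ∈ ℂ((x)); namely p(x) is the coefficient of z¹ in φ(x,z) (i.e., p(x) = ∂φ/∂z(x,0)). -/

import Mathlib

noncomputable section
open scoped Classical

abbrev L : Type := LaurentSeries ℂ
abbrev LZ : Type := PowerSeries L

def Xl : L := HahnSeries.single 1 1

/-- coefficient of `z^n x^j` in an element of `ℂ((x))[[z]]`. -/
def lzCoeff (f : LZ) (n : ℕ) (j : ℤ) : ℂ := ((PowerSeries.coeff (R := L) n) f).coeff j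

/-- integer powers in a commutative ring, via `Ring.inverse` for negative exponents. -/
def zpowR {R : Type*} [CommRing R] (g : R) (m : ℤ) : R :=
  if 0 ≤ m then g ^ m.toNat else Ring.inverse g ^ (-m).toNat

/-- the Laurent series with prescribed coefficients, when it exists (else `0`). -/
def mkL (c : ℤ → ℂ) : L :=
  if h : ∃ g : L, ∀ j, g.coeff j = c j then h.choose else 0

def mkLZ (c : ℕ → ℤ → ℂ) : LZ :=
  if h : ∃ g : LZ, ∀ n j, lzCoeff g n j = c n j then h.choose else 0

/-- Substitution `f(φ(x,z))` of `φ(x,z) ∈ ℂ((x))[[z]]` into `f ∈ ℂ((x))`. -/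
def substL (f : L) (φ : LZ) : LZ :=
  mkLZ fun n j => ∑ᶠ m : ℤ, f.coeff m * lzCoeff (zpowR φ m) n j

/-- `φ(φ(x,x₂),x₀)` as an element of `ℂ((x))[[x₂]][[x₀]]` (outer variable `x₀`). -/
def assocLHS (φ : LZ) : PowerSeries LZ :=
  PowerSeries.mk fun n => substL ((PowerSeries.coeff (R := L) n) φ) φ

/-- `φ(x,x₀+x₂)` as an element of `ℂ((x))[[x₂]][[x₀]]` (outer variable `x₀`). -/
def assocRHS (φ : LZ) : PowerSeries LZ :=
  PowerSeries.mk fun n => PowerSeries.mk fun m =>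
    (((n+m).choose n : ℂ)) • (PowerSeries.coeff (R := L) (n+m)) φ

/-- `φ(x,z) ∈ ℂ((x))[[z]]` is an associate of the additive formal group:
`φ(x,0) = x` and `φ(φ(x,x₂),x₀) = φ(x,x₀+x₂)`. -/
def IsAssociate (φ : LZ) : Prop :=
  (PowerSeries.constantCoeff (R := L)) φ = Xl ∧ assocLHS φ = assocRHS φ

/-- the formal derivative `d/dx` on `ℂ((x))`. -/
def lderiv (f : L) : L := mkL fun j => ((j+1 : ℤ) : ℂ) * f.coeff (j+1)

/-- the operator `p(x) d/dx` on `ℂ((x))`. -/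
def pd (p : L) : L → L := fun f => p * lderiv f

/-- `e^{z p(x) d/dx} x = Σ_{n≥0} (z^n/n!) (p(x)d/dx)^n x ∈ ℂ((x))[[z]]`. -/
def expFlow (p : L) : LZ :=
  PowerSeries.mk fun n => ((n.factorial : ℂ))⁻¹ • ((pd p)^[n] Xl)

section Basics

lemma isPWO_of_bddBelow {s : Set ℤ} (h : BddBelow s) : s.IsPWO :=
  Set.IsWF.isPWO (BddBelow.wellFoundedOn_lt h)

lemma bddBelow_of_isPWO {s : Set ℤ} (h : s.IsPWO) : BddBelow s := by
  rcases s.eq_empty_or_nonempty with rfl | hne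
  · exact bddBelow_empty
  · exact ⟨h.isWF.min hne, fun x hx => h.isWF.min_le hne hx⟩

lemma exists_coeff_bound (f : L) : ∃ E : ℤ, ∀ j : ℤ, j < E → f.coeff j = 0 := by
  obtain ⟨lo, hlo⟩ := bddBelow_of_isPWO f.isPWO_support
  exact ⟨lo, fun j hj => by
    by_contra hne
    exact absurd (hlo hne) (not_le.2 hj)⟩

lemma mkL_coeff {c : ℤ → ℂ} (h : ∃ g : L, ∀ j, g.coeff j = c j) :
    ∀ j, (mkL c).coeff j = c j := by
  rw [mkL, dif_pos h]; exact h.choose_spec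

lemma mkLZ_coeff {c : ℕ → ℤ → ℂ} (h : ∃ g : LZ, ∀ n j, lzCoeff g n j = c n j) :
    ∀ n j, lzCoeff (mkLZ c) n j = c n j := by
  rw [mkLZ, dif_pos h]; exact h.choose_spec

lemma lderiv_ex (f : L) : ∃ g : L, ∀ j, g.coeff j = ((j+1 : ℤ) : ℂ) * f.coeff (j+1) := by
  obtain ⟨E, hE⟩ := exists_coeff_bound f
  refine ⟨⟨fun j => ((j+1 : ℤ) : ℂ) * f.coeff (j+1), ?_⟩, fun _ => rfl⟩
  apply isPWO_of_bddBelow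
  refine ⟨E - 1, fun j hj => ?_⟩
  simp only [Function.mem_support, ne_eq] at hj
  by_contra hlt
  exact hj (by rw [hE (j+1) (by omega), mul_zero])

lemma lderiv_coeff (f : L) (j : ℤ) :
    (lderiv f).coeff j = ((j+1 : ℤ) : ℂ) * f.coeff (j+1) :=
  mkL_coeff (lderiv_ex f) j

lemma lderiv_smul (c : ℂ) (f : L) : lderiv (c • f) = c • lderiv f := by
  refine HahnSeries.coeff_injective (funext fun j => ?_)
  rw [lderiv_coeff, HahnSeries.coeff_smul, HahnSeries.coeff_smul, lderiv_coeff]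
  simp [smul_eq_mul]; ring

lemma lderiv_Xl : lderiv Xl = 1 := by
  refine HahnSeries.coeff_injective (funext fun j => ?_)
  rw [lderiv_coeff, Xl, HahnSeries.coeff_single, HahnSeries.coeff_one]
  rcases eq_or_ne j 0 with rfl | hj
  · norm_num
  · rw [if_neg hj, if_neg (by omega), mul_zero]

end Basics
section Bnd

lemma hahn_mul_coeff_zero_of_lt {a b : L} {α β j : ℤ} (ha : ∀ i < α, a.coeff i = 0)
    (hb : ∀ i < β, b.coeff i = 0) (hj : j < α + β) : (a * b).coeff j = 0 := by
  rw [HahnSeries.coeff_mul]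
  apply Finset.sum_eq_zero
  rintro ⟨i, i'⟩ hii
  rw [Finset.mem_addAntidiagonal] at hii
  obtain ⟨-, -, hsum⟩ := hii
  rcases lt_or_ge i α with h | h
  · rw [ha i h, zero_mul]
  · rw [hb i' (by omega), mul_zero]

lemma lzCoeff_one (k : ℕ) (j : ℤ) :
    lzCoeff 1 k j = if k = 0 ∧ j = 0 then 1 else 0 := by
  rw [lzCoeff]
  rcases eq_or_ne k 0 with rfl | hk
  · rw [PowerSeries.coeff_zero_eq_constantCoeff_apply, map_one, HahnSeries.coeff_one]
    simp
  · rw [PowerSeries.coeff_one, if_neg hk]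
    simp [hk]

/-- key order bound for powers -/
lemma pow_bound {g : LZ} {e D : ℤ} {n : ℕ} (hD : 0 ≤ D)
    (h0 : ∀ j : ℤ, j < e → lzCoeff g 0 j = 0)
    (h1 : ∀ k : ℕ, k ≤ n → ∀ j : ℤ, j < e - D → lzCoeff g k j = 0) :
    ∀ m : ℕ, ∀ k : ℕ, k ≤ n → ∀ j : ℤ, j < (m : ℤ) * e - (k : ℤ) * D →
      lzCoeff (g ^ m) k j = 0 := by
  intro m
  induction m with
  | zero =>
    intro k hk j hj
    rw [pow_zero, lzCoeff_one]
    rcases eq_or_ne k 0 with rfl | hk0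
    · simp only [Nat.cast_zero, zero_mul] at hj
      rw [if_neg (by omega)]
    · rw [if_neg (by simp [hk0])]
  | succ m ih =>
    intro k hk j hj
    rw [pow_succ, lzCoeff, PowerSeries.coeff_mul]
    rw [show ((∑ p ∈ Finset.HasAntidiagonal.antidiagonal k, (PowerSeries.coeff (R := L) p.1) (g ^ m) * (PowerSeries.coeff (R := L) p.2) g).coeff j) = ∑ p ∈ Finset.HasAntidiagonal.antidiagonal k, ((PowerSeries.coeff (R := L) p.1) (g ^ m) * (PowerSeries.coeff (R := L) p.2) g).coeff j from map_sum (HahnSeries.coeff.addMonoidHom j) _ _]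
    apply Finset.sum_eq_zero
    rintro ⟨i, i'⟩ hii
    rw [Finset.HasAntidiagonal.mem_antidiagonal] at hii
    rcases eq_or_ne i' 0 with rfl | hi'
    · refine hahn_mul_coeff_zero_of_lt (α := (m:ℤ) * e - (i:ℤ) * D) (β := e)
        (fun t ht => ih i (by omega) t ht) (fun t ht => h0 t ht) ?_
      have : i = k := by omega
      subst this
      push_cast at hj ⊢
      linarith
    · refine hahn_mul_coeff_zero_of_lt (α := (m:ℤ) * e - (i:ℤ) * D) (β := e - D)
        (fun t ht => ih i (by omega) t ht) (fun t ht => h1 i' (by omega) t ht) ?_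
      have hik : (i : ℤ) + 1 ≤ (k : ℤ) := by
        have : i + 1 ≤ k := by omega
        exact_mod_cast this
      have hm : ((i:ℤ)+1) * D ≤ (k:ℤ) * D := mul_le_mul_of_nonneg_right hik hD
      push_cast at hj ⊢
      nlinarith [hj, hm]

end Bnd
section Phi

variable {φ : LZ} (hc : (PowerSeries.constantCoeff (R := L)) φ = Xl)

lemma Xl_ne_zero : (Xl : L) ≠ 0 := HahnSeries.single_ne_zero one_ne_zero

lemma sXl_mul_Xl : (HahnSeries.single (-1 : ℤ) 1 : L) * Xl = 1 := by
  rw [Xl, HahnSeries.single_mul_single]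
  norm_num

include hc in
lemma phi_isUnit : IsUnit φ := by
  rw [PowerSeries.isUnit_iff_constantCoeff, hc]
  exact IsUnit.of_mul_eq_one _ ((mul_comm _ _).trans sXl_mul_Xl)

include hc in
lemma phi_mul_inv : φ * Ring.inverse φ = 1 := Ring.mul_inverse_cancel φ (phi_isUnit hc)

include hc in
lemma inv_const : (PowerSeries.constantCoeff (R := L)) (Ring.inverse φ) = HahnSeries.single (-1 : ℤ) 1 := by
  have h := congrArg (PowerSeries.constantCoeff (R := L)) (phi_mul_inv hc)
  rw [map_mul, map_one, hc] at h
  calc (PowerSeries.constantCoeff (R := L)) (Ring.inverse φ)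
      = ((HahnSeries.single (-1 : ℤ) 1 : L) * Xl) * (PowerSeries.constantCoeff (R := L)) (Ring.inverse φ) := by
        rw [sXl_mul_Xl, one_mul]
    _ = (HahnSeries.single (-1 : ℤ) 1 : L) * (Xl * (PowerSeries.constantCoeff (R := L)) (Ring.inverse φ)) := mul_assoc _ _ _
    _ = _ := by rw [h, mul_one]

lemma exists_unif_bound (g : LZ) (n : ℕ) :
    ∃ E : ℤ, ∀ k : ℕ, k ≤ n → ∀ j : ℤ, j < E → lzCoeff g k j = 0 := by
  induction n with
  | zero =>
    obtain ⟨E, hE⟩ := exists_coeff_bound ((PowerSeries.coeff (R := L) 0) g)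
    exact ⟨E, fun k hk j hj => by
      interval_cases k
      exact hE j hj⟩
  | succ n ih =>
    obtain ⟨E, hE⟩ := ih
    obtain ⟨E', hE'⟩ := exists_coeff_bound ((PowerSeries.coeff (R := L) (n+1)) g)
    refine ⟨min E E', fun k hk j hj => ?_⟩
    rcases Nat.lt_succ_iff_lt_or_eq.1 (Nat.lt_succ_of_le hk) with h | rfl
    · exact hE k (by omega) j (lt_of_lt_of_le hj (min_le_left _ _))
    · exact hE' j (lt_of_lt_of_le hj (min_le_right _ _))

include hc in
/-- uniform bound for integer powers of φ -/
lemma zpowR_bound (n : ℕ) :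
    ∃ C : ℤ, ∀ m : ℤ, ∀ k : ℕ, k ≤ n → ∀ j : ℤ, j < m - C →
      lzCoeff (zpowR φ m) k j = 0 := by
  obtain ⟨E, hE⟩ := exists_unif_bound φ n
  obtain ⟨E', hE'⟩ := exists_unif_bound (Ring.inverse φ) n
  set D : ℤ := max (1 - E) 0 with hD
  set D' : ℤ := max (-1 - E') 0 with hD'
  have hD0 : 0 ≤ D := le_max_right _ _
  have hD'0 : 0 ≤ D' := le_max_right _ _
  have h0 : ∀ j : ℤ, j < 1 → lzCoeff φ 0 j = 0 := fun j hj => by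
    rw [lzCoeff, PowerSeries.coeff_zero_eq_constantCoeff_apply, hc, Xl,
      HahnSeries.coeff_single, if_neg (by omega)]
  have h0' : ∀ j : ℤ, j < -1 → lzCoeff (Ring.inverse φ) 0 j = 0 := fun j hj => by
    rw [lzCoeff, PowerSeries.coeff_zero_eq_constantCoeff_apply, inv_const hc,
      HahnSeries.coeff_single, if_neg (by omega)]
  have hbp := pow_bound (g := φ) (e := 1) (n := n) hD0 h0
    (fun k hk j hj => hE k hk j (by omega))
  have hbn := pow_bound (g := Ring.inverse φ) (e := -1) (n := n) hD'0 h0'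
    (fun k hk j hj => hE' k hk j (by omega))
  refine ⟨(n : ℤ) * max D D', fun m k hk j hj => ?_⟩
  have hkn : (k : ℤ) ≤ (n : ℤ) := by exact_mod_cast hk
  rw [zpowR]
  split_ifs with hm
  · refine hbp m.toNat k hk j ?_
    have : (m.toNat : ℤ) = m := Int.toNat_of_nonneg hm
    rw [this, mul_one]
    have : (k : ℤ) * D ≤ (n : ℤ) * max D D' :=
      mul_le_mul hkn (le_max_left _ _) hD0 (by positivity)
    omega
  · refine hbn (-m).toNat k hk j ?_
    have hmn : ((-m).toNat : ℤ) = -m := Int.toNat_of_nonneg (by omega)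
    rw [hmn]
    have : (k : ℤ) * D' ≤ (n : ℤ) * max D D' :=
      mul_le_mul hkn (le_max_right _ _) hD'0 (by positivity)
    omega

end Phi
section Subst

variable {φ : LZ} (hc : (PowerSeries.constantCoeff (R := L)) φ = Xl)

include hc in
lemma substL_coeff (f : L) (n : ℕ) (j : ℤ) :
    lzCoeff (substL f φ) n j = ∑ᶠ m : ℤ, f.coeff m * lzCoeff (zpowR φ m) n j := by
  classical
  obtain ⟨lo, hlo⟩ := bddBelow_of_isPWO f.isPWO_support
  have hCn : ∀ n : ℕ, ∃ C : ℤ, ∀ m : ℤ, ∀ k : ℕ, k ≤ n → ∀ j : ℤ, j < m - C →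
      lzCoeff (zpowR φ m) k j = 0 := fun n => zpowR_bound hc n
  choose C hC using hCn
  set c : ℕ → ℤ → ℂ := fun n j => ∑ᶠ m : ℤ, f.coeff m * lzCoeff (zpowR φ m) n j with hcdef
  have hterm : ∀ n : ℕ, ∀ j m : ℤ, f.coeff m * lzCoeff (zpowR φ m) n j ≠ 0 →
      lo ≤ m ∧ m - C n ≤ j := by
    intro n j m hne
    have hf : f.coeff m ≠ 0 := fun h => hne (by rw [h, zero_mul])
    have hz : lzCoeff (zpowR φ m) n j ≠ 0 := fun h => hne (by rw [h, mul_zero])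
    refine ⟨hlo hf, ?_⟩
    by_contra hlt
    exact hz (hC n m n le_rfl j (by omega))
  have hpwo : ∀ n : ℕ, (Function.support (c n)).IsPWO := by
    intro n
    apply isPWO_of_bddBelow
    refine ⟨lo - C n, fun j hj => ?_⟩
    simp only [Function.mem_support, ne_eq, hcdef] at hj
    by_contra hjlt
    apply hj
    apply finsum_eq_zero_of_forall_eq_zero
    intro m
    by_contra hne
    have := hterm n j m hne
    omega
  have hex : ∃ g : LZ, ∀ n j, lzCoeff g n j = c n j := by
    refine ⟨PowerSeries.mk fun n => (⟨c n, hpwo n⟩ : L), fun n j => ?_⟩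
    rw [lzCoeff, PowerSeries.coeff_mk]
  rw [substL]
  exact mkLZ_coeff hex n j

include hc in
/-- summand support is finite (useful for computing the finsum) -/
lemma substL_support_finite (f : L) (n : ℕ) (j : ℤ) :
    (Function.support fun m : ℤ => f.coeff m * lzCoeff (zpowR φ m) n j).Finite := by
  obtain ⟨lo, hlo⟩ := bddBelow_of_isPWO f.isPWO_support
  obtain ⟨C, hC⟩ := zpowR_bound hc n
  apply Set.Finite.subset (Set.finite_Icc lo (j + C))
  intro m hm
  simp only [Function.mem_support, ne_eq] at hm
  have hf : f.coeff m ≠ 0 := fun h => hm (by rw [h, zero_mul])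
  have hz : lzCoeff (zpowR φ m) n j ≠ 0 := fun h => hm (by rw [h, mul_zero])
  refine ⟨hlo hf, ?_⟩
  by_contra hlt
  exact hz (hC m n le_rfl j (by omega))

end Subst
section Coeff1

lemma single_add' (a : ℤ) (r s : ℂ) :
    (HahnSeries.single a (r + s) : L) = HahnSeries.single a r + HahnSeries.single a s := by
  refine HahnSeries.coeff_injective (funext fun j => ?_)
  rw [HahnSeries.coeff_add, HahnSeries.coeff_single, HahnSeries.coeff_single,
    HahnSeries.coeff_single]
  split_ifs <;> simp

lemma lz_coeff_one_mul (A B : LZ) :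
    (PowerSeries.coeff (R := L) 1) (A * B) =
      (PowerSeries.constantCoeff (R := L)) A * (PowerSeries.coeff (R := L) 1) B +
      (PowerSeries.coeff (R := L) 1) A * (PowerSeries.constantCoeff (R := L)) B := by
  rw [PowerSeries.coeff_mul, Finset.Nat.sum_antidiagonal_eq_sum_range_succ_mk,
    Finset.sum_range_succ, Finset.sum_range_one]
  norm_num [PowerSeries.coeff_zero_eq_constantCoeff_apply]

lemma coeff0_pow (g : LZ) (a : ℤ) (hg : (PowerSeries.constantCoeff (R := L)) g = HahnSeries.single a 1) (t : ℕ) :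
    (PowerSeries.constantCoeff (R := L)) (g ^ t) = HahnSeries.single ((t : ℤ) * a) (1:ℂ) := by
  rw [map_pow, hg, HahnSeries.single_pow, one_pow, nsmul_eq_mul]

lemma coeff1_pow (g : LZ) (a : ℤ) (hg : (PowerSeries.constantCoeff (R := L)) g = HahnSeries.single a 1) (t : ℕ) :
    (PowerSeries.coeff (R := L) 1) (g ^ t) =
      (HahnSeries.single (((t : ℤ) - 1) * a) ((t : ℂ))) * (PowerSeries.coeff (R := L) 1) g := by
  induction t with
  | zero =>
    rw [pow_zero, PowerSeries.coeff_one, if_neg one_ne_zero]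
    norm_num [HahnSeries.single_eq_zero]
  | succ t ih =>
    rw [pow_succ, lz_coeff_one_mul, ih, coeff0_pow g a hg t, hg]
    have h1 : ((HahnSeries.single (((t:ℤ) - 1) * a) ((t:ℂ)) : L) * (PowerSeries.coeff (R := L) 1) g) * (HahnSeries.single a (1:ℂ))
        = (HahnSeries.single ((t : ℤ) * a) ((t:ℂ))) * (PowerSeries.coeff (R := L) 1) g := by
      rw [mul_comm _ (HahnSeries.single a (1:ℂ) : L), ← mul_assoc, HahnSeries.single_mul_single, one_mul]
      ring_nf
    rw [h1]
    have h2 : (((t:ℕ)+1 : ℤ) - 1) * a = (t:ℤ) * a := by ring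
    push_cast [h2]
    rw [ show ((t:ℂ) + 1) = (1:ℂ) + (t:ℂ) from by ring, single_add', add_mul]

end Coeff1
section Coeff1b

lemma single_neg' (a : ℤ) (r : ℂ) :
    (HahnSeries.single a (-r) : L) = -HahnSeries.single a r := by
  refine HahnSeries.coeff_injective (funext fun j => ?_)
  rw [HahnSeries.coeff_neg, HahnSeries.coeff_single, HahnSeries.coeff_single]
  split_ifs <;> simp

variable {φ : LZ} (hc : (PowerSeries.constantCoeff (R := L)) φ = Xl)

include hc in
lemma inv_coeff1 : (PowerSeries.coeff (R := L) 1) (Ring.inverse φ) =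
    HahnSeries.single (-2 : ℤ) (-1 : ℂ) * (PowerSeries.coeff (R := L) 1) φ := by
  have h := congrArg (PowerSeries.coeff (R := L) 1) (phi_mul_inv hc)
  rw [lz_coeff_one_mul, hc, inv_const hc, PowerSeries.coeff_one, if_neg one_ne_zero] at h
  have h2 : Xl * (PowerSeries.coeff (R := L) 1) (Ring.inverse φ) =
      -((PowerSeries.coeff (R := L) 1) φ * (HahnSeries.single (-1 : ℤ) (1:ℂ))) := by
    linear_combination h
  calc (PowerSeries.coeff (R := L) 1) (Ring.inverse φ)
      = ((HahnSeries.single (-1 : ℤ) (1:ℂ) : L) * Xl) * (PowerSeries.coeff (R := L) 1) (Ring.inverse φ) := by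
        rw [sXl_mul_Xl, one_mul]
    _ = (HahnSeries.single (-1 : ℤ) (1:ℂ) : L) * (Xl * (PowerSeries.coeff (R := L) 1) (Ring.inverse φ)) :=
        mul_assoc _ _ _
    _ = HahnSeries.single (-2 : ℤ) (-1 : ℂ) * (PowerSeries.coeff (R := L) 1) φ := by
        rw [h2, single_neg' (-2 : ℤ) (1 : ℂ)]
        have : (HahnSeries.single (-1 : ℤ) (1:ℂ) : L) *
            ((PowerSeries.coeff (R := L) 1) φ * (HahnSeries.single (-1 : ℤ) (1:ℂ))) =
            (HahnSeries.single (-2 : ℤ) (1:ℂ) : L) * (PowerSeries.coeff (R := L) 1) φ := by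
          rw [mul_comm ((PowerSeries.coeff (R := L) 1) φ) _, ← mul_assoc, HahnSeries.single_mul_single,
            one_mul]
          norm_num
        linear_combination -this

include hc in
lemma zpowR_coeff1 (m : ℤ) :
    (PowerSeries.coeff (R := L) 1) (zpowR φ m) =
      HahnSeries.single (m - 1) ((m : ℂ)) * (PowerSeries.coeff (R := L) 1) φ := by
  rw [zpowR]
  split_ifs with hm
  · rw [coeff1_pow φ 1 (by rw [hc]; rfl) m.toNat]
    have h1 : ((m.toNat : ℤ) - 1) * 1 = m - 1 := by
      rw [Int.toNat_of_nonneg hm]; ring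
    have h2 : ((m.toNat : ℕ) : ℂ) = (m : ℂ) := by
      have := Int.toNat_of_nonneg hm
      exact_mod_cast congrArg (Int.cast : ℤ → ℂ) this
    rw [h1, h2]
  · rw [coeff1_pow (Ring.inverse φ) (-1) (by rw [inv_const hc]) (-m).toNat, inv_coeff1 hc]
    have ht : ((-m).toNat : ℤ) = -m := Int.toNat_of_nonneg (by omega)
    have h1 : (((-m).toNat : ℤ) - 1) * (-1) = m + 1 := by rw [ht]; ring
    have h2 : (((-m).toNat : ℕ) : ℂ) = (-m : ℂ) := by exact_mod_cast congrArg (Int.cast : ℤ → ℂ) ht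
    rw [h1, h2, ← mul_assoc, HahnSeries.single_mul_single]
    norm_num
    left
    congr 1
    ring

include hc in
lemma zpowR_lzCoeff1 (m : ℤ) (j : ℤ) :
    lzCoeff (zpowR φ m) 1 j = (m : ℂ) * ((PowerSeries.coeff (R := L) 1) φ).coeff (j - (m - 1)) := by
  rw [lzCoeff, zpowR_coeff1 hc m,
    show j = (j - (m - 1)) + (m - 1) from by omega, HahnSeries.coeff_single_mul_add]
  ring_nf

end Coeff1b
section MulFinsum

lemma hahn_mul_coeff_finsum (a b : L) (j : ℤ) :
    (a * b).coeff j = ∑ᶠ k : ℤ, a.coeff k * b.coeff (j - k) := by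
  classical
  set T : Finset ℤ :=
    (Finset.antidiagonal a.isPWO_support b.isPWO_support j).image Prod.fst with hT
  have hsupp : (Function.support fun k => a.coeff k * b.coeff (j - k)) ⊆ ↑T := by
    intro k hk
    simp only [Function.mem_support, ne_eq] at hk
    have ha : a.coeff k ≠ 0 := fun h => hk (by rw [h, zero_mul])
    have hb : b.coeff (j - k) ≠ 0 := fun h => hk (by rw [h, mul_zero])
    refine Finset.mem_coe.2 (Finset.mem_image.2 ⟨(k, j - k), ?_, rfl⟩)
    rw [Finset.mem_addAntidiagonal]
    exact ⟨ha, hb, by omega⟩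
  rw [finsum_eq_sum_of_support_subset _ hsupp, hT,
    Finset.sum_image (fun x hx y hy hxy => ?_), HahnSeries.coeff_mul]
  · apply Finset.sum_congr rfl
    rintro ⟨i, i'⟩ hii
    rw [Finset.mem_addAntidiagonal] at hii
    obtain ⟨-, -, hs⟩ := hii
    dsimp only at hs ⊢
    rw [show j - i = i' from by omega]
  · rw [Finset.mem_coe, Finset.mem_addAntidiagonal] at hx hy
    obtain ⟨-, -, hx3⟩ := hx
    obtain ⟨-, -, hy3⟩ := hy
    exact Prod.ext hxy (by omega)

variable {φ : LZ} (hc : (PowerSeries.constantCoeff (R := L)) φ = Xl)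

include hc in
/-- the fundamental computation: the `z¹` coefficient of `f(φ(x,z))` is `p·f'`. -/
lemma substL_lzCoeff1 (f : L) (j : ℤ) :
    lzCoeff (substL f φ) 1 j = ((PowerSeries.coeff (R := L) 1) φ * lderiv f).coeff j := by
  set p : L := (PowerSeries.coeff (R := L) 1) φ with hp
  have hA : lzCoeff (substL f φ) 1 j
      = ∑ᶠ m : ℤ, f.coeff m * ((m : ℂ) * p.coeff (j - (m - 1))) := by
    rw [substL_coeff hc f 1 j]
    exact finsum_congr fun m => by rw [zpowR_lzCoeff1 hc m j]
  have hB : (p * lderiv f).coeff j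
      = ∑ᶠ k : ℤ, p.coeff k * (((j - k + 1 : ℤ) : ℂ) * f.coeff (j - k + 1)) := by
    rw [hahn_mul_coeff_finsum]
    exact finsum_congr fun k => by rw [lderiv_coeff]
  rw [hA, hB]
  let e : ℤ ≃ ℤ := ⟨fun m => j + 1 - m, fun m => j + 1 - m,
    fun m => by show j + 1 - (j + 1 - m) = m; omega, fun m => by show j + 1 - (j + 1 - m) = m; omega⟩
  rw [← finsum_comp_equiv e (f := fun k => p.coeff k * (((j - k + 1 : ℤ) : ℂ) * f.coeff (j - k + 1)))]
  apply finsum_congr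
  intro m
  show f.coeff m * ((m : ℂ) * p.coeff (j - (m - 1)))
      = p.coeff (j + 1 - m) * (((j - (j + 1 - m) + 1 : ℤ) : ℂ) * f.coeff (j - (j + 1 - m) + 1))
  rw [show j - (j + 1 - m) + 1 = m from by omega, show j - (m - 1) = j + 1 - m from by omega]
  ring

end MulFinsum
section SmulHelp

lemma csmul_eq_single (c : ℂ) (x : L) : c • x = HahnSeries.single (0:ℤ) c * x :=
  (HahnSeries.single_zero_mul_eq_smul).symm

lemma csmul_mul_comm (c : ℂ) (x y : L) : x * (c • y) = c • (x * y) := by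
  rw [csmul_eq_single, csmul_eq_single]; ring

lemma csmul_csmul (a b : ℂ) (x : L) : a • (b • x) = (a * b) • x := by
  rw [csmul_eq_single, csmul_eq_single, csmul_eq_single, ← mul_assoc,
    HahnSeries.single_mul_single, add_zero]

end SmulHelp

/-- Every associate of `F_a(x,y) = x+y` is of the form `e^{z p(x) d/dx} x` for a uniquely
determined `p(x) ∈ ℂ((x))`, namely `p(x) = ∂φ/∂z(x,0)`, the coefficient of `z¹` in `φ`. -/
theorem associate_eq_expFlow (φ : LZ) (h : IsAssociate φ) :
    φ = expFlow ((PowerSeries.coeff (R := L) 1) φ) ∧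
      ∀ p : L, φ = expFlow p → p = (PowerSeries.coeff (R := L) 1) φ := by
  obtain ⟨hc, hassoc⟩ := h
  set p : L := (PowerSeries.coeff (R := L) 1) φ with hp
  have hrec : ∀ n : ℕ, p * lderiv ((PowerSeries.coeff (R := L) n) φ)
      = (((n : ℂ) + 1)) • (PowerSeries.coeff (R := L) (n+1)) φ := by
    intro n
    have h1 : substL ((PowerSeries.coeff (R := L) n) φ) φ
        = PowerSeries.mk fun m => (((n+m).choose n : ℂ)) • (PowerSeries.coeff (R := L) (n+m)) φ := by
      have := congrArg (PowerSeries.coeff (R := LZ) n) hassoc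
      rwa [assocLHS, assocRHS, PowerSeries.coeff_mk, PowerSeries.coeff_mk] at this
    refine HahnSeries.coeff_injective (funext fun j => ?_)
    have h2 := congrArg (fun g : LZ => lzCoeff g 1 j) h1
    rw [substL_lzCoeff1 hc, lzCoeff, PowerSeries.coeff_mk, Nat.choose_succ_self_right] at h2
    rw [h2, HahnSeries.coeff_smul, HahnSeries.coeff_smul]
    push_cast
    ring
  have hcoeff : ∀ n : ℕ, (PowerSeries.coeff (R := L) n) φ
      = ((n.factorial : ℂ))⁻¹ • ((pd p)^[n] Xl) := by
    intro n
    induction n with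
    | zero =>
      simp only [Nat.factorial_zero, Nat.cast_one, inv_one, one_smul, Function.iterate_zero,
        id_eq]
      rw [PowerSeries.coeff_zero_eq_constantCoeff_apply, hc]
    | succ n ih =>
      have hne : ((n : ℂ) + 1) ≠ 0 := Nat.cast_add_one_ne_zero n
      have h3 : (PowerSeries.coeff (R := L) (n+1)) φ
          = ((n : ℂ) + 1)⁻¹ • (p * lderiv ((PowerSeries.coeff (R := L) n) φ)) := by
        rw [hrec n, csmul_csmul, inv_mul_cancel₀ hne, one_smul]
      rw [h3, ih, lderiv_smul, csmul_mul_comm, csmul_csmul, Function.iterate_succ_apply']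
      congr 1
      · rw [Nat.factorial_succ]
        push_cast
        rw [mul_inv]
  constructor
  · refine PowerSeries.ext fun n => ?_
    rw [expFlow, PowerSeries.coeff_mk]
    exact hcoeff n
  · intro q hq
    have := congrArg (PowerSeries.coeff (R := L) 1) hq
    rw [expFlow, PowerSeries.coeff_mk] at this
    simp only [Nat.factorial_one, Nat.cast_one, inv_one, one_smul,
      Function.iterate_one] at this
    rw [pd, lderiv_Xl, mul_one] at this
    exact this.symm

end
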